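/- Let b ≥ 2 and let T be a tree of maximum degree b+2 rooted at a vertex s of degree at most b+1. If T is not a complete tree (i.e., some internal vertex has fewer than b+1 children, or some internal non-root vertex has degree at most b+1), then there is a valid firefighting strategy with b firefighters per time step, with the fire starting at s, that saves all leaves of T. -/

import Mathlib

/-- `burnedSet G s φ t` is the set of vertices of `G` burned at time `t` in the firefighting
process where `s` is burned at time `0` and `φ t'` is the set of vertices protected at time
step `t'`: at each step the fire spreads from every burned vertex to each of its neighbors
that has not been protected at any time step so far. -/
def burnedSet {V : Type} (G : SimpleGraph V) (s : V) (φ : ℕ → Finset V) : ℕ → Set V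
  | 0 => {s}
  | t + 1 => burnedSet G s φ t ∪
      {w | (∃ v ∈ burnedSet G s φ t, G.Adj v w) ∧ ∀ t' ≤ t + 1, w ∉ φ t'}

/-- A strategy is valid with respect to budget `b` if no vertex is protected at time `0`,
at most `b` vertices are protected at each time step, and a vertex protected at time `t+1`
is not burned at time `t`. -/
def validStrategy {V : Type} (G : SimpleGraph V) (s : V) (b : ℕ) (φ : ℕ → Finset V) : Prop :=
  φ 0 = ∅ ∧ (∀ t, (φ t).card ≤ b) ∧ ∀ t v, v ∈ φ (t + 1) → v ∉ burnedSet G s φ t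

/-- A vertex is saved if it is never burned. -/
def savedBy {V : Type} (G : SimpleGraph V) (s : V) (φ : ℕ → Finset V) (v : V) : Prop :=
  ∀ t, v ∉ burnedSet G s φ t


namespace FFaux
open SimpleGraph Walk

variable {V : Type} {G : SimpleGraph V}

def wtake {u v : V} : (p : G.Walk u v) → (n : ℕ) → G.Walk u (p.getVert n)
  | p, 0 => Walk.nil.copy rfl (p.getVert_zero).symm
  | Walk.nil, n+1 => Walk.nil.copy rfl
      (by rw [Walk.getVert_of_length_le _ (by simp : Walk.nil.length ≤ n+1)])
  | Walk.cons h q, n+1 => Walk.cons h (wtake q n)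

lemma length_wtake {u v : V} : ∀ (p : G.Walk u v) (n : ℕ), n ≤ p.length →
    (wtake p n).length = n
  | p, 0, _ => by simp [wtake]
  | Walk.nil, n+1, h => by simp at h
  | Walk.cons h q, n+1, hn => by
      simp only [wtake, Walk.length_cons]
      exact congrArg (· + 1) (length_wtake q n (by simpa using hn))

lemma support_wtake_subset {u v : V} : ∀ (p : G.Walk u v) (n : ℕ) (w : V),
    w ∈ (wtake p n).support → w ∈ p.support
  | p, 0, w => by
      simp only [wtake, Walk.support_copy, Walk.support_nil, List.mem_singleton]
      rintro rfl; exact Walk.start_mem_support p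
  | Walk.nil, n+1, w => by
      simp only [wtake, Walk.support_copy]
      exact fun h => h
  | Walk.cons h q, n+1, w => by
      show w ∈ u :: (wtake q n).support → w ∈ u :: q.support
      simp only [List.mem_cons]
      rintro (rfl | hmem)
      · exact Or.inl rfl
      · exact Or.inr (support_wtake_subset q n w hmem)

lemma isPath_wtake {u v : V} : ∀ {p : G.Walk u v} (_ : p.IsPath) (n : ℕ), (wtake p n).IsPath
  | p, hp, 0 => by
      rw [wtake, Walk.isPath_copy]; exact Walk.IsPath.nil
  | Walk.nil, hp, n+1 => by
      rw [wtake, Walk.isPath_copy]; exact Walk.IsPath.nil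
  | Walk.cons h q, hp, n+1 => by
      rw [Walk.cons_isPath_iff] at hp
      show (Walk.cons h (wtake q n)).IsPath
      rw [Walk.cons_isPath_iff]
      exact ⟨isPath_wtake hp.1 n, fun hmem => hp.2 (support_wtake_subset q n _ hmem)⟩

lemma getVert_drop' {u v : V} (p : G.Walk u v) : ∀ (n m : ℕ),
    (p.drop n).getVert m = p.getVert (n + m) := by
  induction p with
  | nil =>
    intro n m
    cases n <;> rfl
  | cons h q ih =>
    intro n m
    cases n with
    | zero =>
      show ((Walk.cons h q).copy (Walk.getVert_zero _).symm rfl).getVert m = _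
      rw [Walk.getVert_copy, Nat.zero_add]
    | succ n =>
      show ((q.drop n).copy rfl rfl).getVert m = _
      rw [Walk.getVert_copy, ih n m]
      have : n + 1 + m = (n + m) + 1 := by omega
      rw [this, Walk.getVert_cons_succ]

end FFaux

namespace FFaux2
open SimpleGraph Walk
variable {V : Type} {G : SimpleGraph V}
open FFaux

lemma length_drop' {u v : V} (p : G.Walk u v) : ∀ (n : ℕ), (p.drop n).length = p.length - n := by
  induction p with
  | nil =>
    intro n
    cases n with
    | zero => rfl
    | succ n => show (Walk.nil : G.Walk u u).length = _; simp
  | cons h q ih =>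
    intro n
    cases n with
    | zero =>
      show ((Walk.cons h q).copy (Walk.getVert_zero _).symm rfl).length = _
      rw [Walk.length_copy]; rfl
    | succ n =>
      show ((q.drop n).copy rfl rfl).length = _
      rw [Walk.length_copy, ih n, Walk.length_cons]
      omega

lemma isPath_drop' {u v : V} (p : G.Walk u v) : ∀ (n : ℕ), p.IsPath → (p.drop n).IsPath := by
  induction p with
  | nil => intro n _; cases n <;> exact Walk.IsPath.nil
  | cons h q ih =>
    intro n hp
    cases n with
    | zero =>
      show ((Walk.cons h q).copy (Walk.getVert_zero _).symm rfl).IsPath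
      rwa [Walk.isPath_copy]
    | succ n =>
      show ((q.drop n).copy rfl rfl).IsPath
      rw [Walk.isPath_copy]
      exact ih n ((Walk.cons_isPath_iff h q).mp hp).1

lemma getVert_mem_support' {u v : V} (p : G.Walk u v) (n : ℕ) : p.getVert n ∈ p.support := by
  rw [Walk.mem_support_iff_exists_getVert]
  rcases le_or_gt n p.length with h | h
  · exact ⟨n, rfl, h⟩
  · exact ⟨p.length, by rw [Walk.getVert_length, Walk.getVert_of_length_le _ h.le], le_refl _⟩

lemma getVert_inj' {u v : V} {p : G.Walk u v} (hp : p.IsPath) :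
    ∀ {i j : ℕ}, i ≤ p.length → j ≤ p.length → p.getVert i = p.getVert j → i = j := by
  induction p with
  | nil => intro i j hi hj _; simp only [Walk.length_nil, Nat.le_zero] at hi hj; omega
  | cons h q ih =>
    intro i j hi hj heq
    rw [Walk.cons_isPath_iff] at hp
    rw [Walk.length_cons] at hi hj
    match i, j with
    | 0, 0 => rfl
    | 0, j+1 =>
      exfalso
      rw [Walk.getVert_zero, Walk.getVert_cons_succ] at heq
      exact hp.2 (heq ▸ getVert_mem_support' q j)
    | i+1, 0 =>
      exfalso
      rw [Walk.getVert_zero, Walk.getVert_cons_succ] at heq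
      exact hp.2 (heq ▸ getVert_mem_support' q i)
    | i+1, j+1 =>
      rw [Walk.getVert_cons_succ, Walk.getVert_cons_succ] at heq
      exact congrArg (· + 1) (ih hp.1 (by omega) (by omega) heq)

lemma chord {u v : V} (huniq : ∀ vv ww : V, ∃! q : G.Walk vv ww, q.IsPath)
    {p : G.Walk u v} (hp : p.IsPath) {i j : ℕ} (hij : i < j) (hj : j ≤ p.length)
    (hadj : G.Adj (p.getVert i) (p.getVert j)) : j = i + 1 := by
  have hq : (p.drop i).IsPath := isPath_drop' p i hp
  have hend : (p.drop i).getVert (j - i) = p.getVert j := by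
    rw [getVert_drop']; congr 1; omega
  have hlen : (wtake (p.drop i) (j - i)).length = j - i :=
    length_wtake _ _ (by rw [length_drop']; omega)
  have hrpath : ((wtake (p.drop i) (j - i)).copy rfl hend).IsPath := by
    rw [Walk.isPath_copy]; exact isPath_wtake hq _
  have hepath : (Walk.cons hadj Walk.nil : G.Walk (p.getVert i) (p.getVert j)).IsPath := by
    simp [Walk.cons_isPath_iff, hadj.ne]
  obtain ⟨w, -, hw⟩ := huniq (p.getVert i) (p.getVert j)
  have heq := (hw _ hrpath).trans (hw _ hepath).symm
  have := congrArg Walk.length heq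
  rw [Walk.length_copy, hlen] at this
  simp only [Walk.length_cons, Walk.length_nil] at this
  omega

end FFaux2

/-- Let `b ≥ 2` and let `T` be a tree of maximum degree `b+2` rooted at a vertex `s` of
degree at most `b+1` (the leaves of `T` are its vertices of degree `1` other than `s`).
If `T` is not complete — i.e. some internal (non-leaf) vertex is either the root with at
most `b` children (degree at most `b`) or a non-root vertex with at most `b` children
(degree at most `b+1`) — then there is a valid firefighting strategy with `b` firefighters
per time step, fire starting at `s`, saving all leaves of `T`. -/
theorem stmt2 {V : Type} [Fintype V] [DecidableEq V] (G : SimpleGraph V) [DecidableRel G.Adj]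
    (hG : G.IsTree) (s : V) (b : ℕ) (hb : 2 ≤ b)
    (hmax : ∀ v, G.degree v ≤ b + 2) (hs : G.degree s ≤ b + 1)
    (hnotcomplete : ∃ v, ¬(G.degree v = 1 ∧ v ≠ s) ∧
      ((v = s ∧ G.degree v ≤ b) ∨ (v ≠ s ∧ G.degree v ≤ b + 1))) :
    ∃ φ : ℕ → Finset V, validStrategy G s b φ ∧
      ∀ v, G.degree v = 1 → v ≠ s → savedBy G s φ v := by
  classical
  obtain ⟨v, hvleaf, hvdeg⟩ := hnotcomplete
  obtain ⟨p, hp, -⟩ := hG.existsUnique_path s v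
  set k := p.length with hkdef
  set P : ℕ → V := p.getVert with hPdef
  have hP0 : P 0 = s := p.getVert_zero
  have hPk : ∀ j, k ≤ j → P j = v := fun j hj => p.getVert_of_length_le hj
  have hadj : ∀ i, i < k → G.Adj (P i) (P (i + 1)) := fun i hi => p.adj_getVert_succ hi
  have hinj : ∀ i j, i ≤ k → j ≤ k → P i = P j → i = j :=
    fun i j hi hj => FFaux2.getVert_inj' hp hi hj
  have hchord : ∀ i j, i ≤ k → j ≤ k → G.Adj (P i) (P j) → j = i + 1 ∨ i = j + 1 := by
    intro i j hi hj hadj'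
    rcases lt_trichotomy i j with h | h | h
    · exact Or.inl (FFaux2.chord hG.existsUnique_path hp h hj hadj')
    · exact absurd hadj' (by rw [h]; exact G.irrefl)
    · exact Or.inr (FFaux2.chord hG.existsUnique_path hp h hi hadj'.symm)
  have hsupp : ∀ j, P j ∈ p.support := FFaux2.getVert_mem_support' p
  clear_value k P
  set φ : ℕ → Finset V := fun t =>
    if t = 0 ∨ k + 2 ≤ t then ∅ else G.neighborFinset (P (t - 1)) \ {P t, P (t - 2)} with hφdef
  have hφmem : ∀ t w, w ∈ φ t ↔
      (1 ≤ t ∧ t ≤ k + 1 ∧ G.Adj (P (t - 1)) w ∧ w ≠ P t ∧ w ≠ P (t - 2)) := by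
    intro t w
    rw [hφdef]
    simp only
    split_ifs with h
    · simp only [Finset.notMem_empty, false_iff]
      omega
    · push_neg at h
      simp only [Finset.mem_sdiff, SimpleGraph.mem_neighborFinset, Finset.mem_insert,
        Finset.mem_singleton, not_or]
      constructor
      · rintro ⟨hN, hne1, hne2⟩
        exact ⟨by omega, by omega, hN, hne1, hne2⟩
      · rintro ⟨-, -, hN, hne1, hne2⟩
        exact ⟨hN, hne1, hne2⟩
  have hinv : ∀ t, burnedSet G s φ t = {w | ∃ j, j ≤ t ∧ j ≤ k ∧ w = P j} := by
    intro t
    induction t with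
    | zero =>
      rw [burnedSet]
      ext w
      simp only [Set.mem_singleton_iff, Set.mem_setOf_eq]
      constructor
      · rintro rfl; exact ⟨0, le_refl _, Nat.zero_le _, hP0.symm⟩
      · rintro ⟨j, hj, -, rfl⟩
        have : j = 0 := by omega
        rw [this, hP0]
    | succ t ih =>
      rw [burnedSet, ih]
      ext w
      simp only [Set.mem_union, Set.mem_setOf_eq]
      constructor
      · rintro (⟨j, hjt, hjk, rfl⟩ | ⟨⟨u, ⟨j, hjt, hjk, rfl⟩, hadjw⟩, hprot⟩)
        · exact ⟨j, by omega, hjk, rfl⟩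
        · by_cases hws : w ∈ p.support
          · rw [SimpleGraph.Walk.mem_support_iff_exists_getVert] at hws
            obtain ⟨m, hm, hmk⟩ := hws
            rw [← hPdef] at hm
            rw [← hkdef] at hmk
            rcases hchord j m hjk hmk (by rwa [← hm] at hadjw) with h1 | h1
            · exact ⟨m, by omega, hmk, hm.symm⟩
            · exact ⟨m, by omega, hmk, hm.symm⟩
          · exfalso
            apply hprot (j + 1) (by omega)
            rw [hφmem]
            refine ⟨by omega, by omega, ?_, ?_, ?_⟩
            · have : j + 1 - 1 = j := by omega
              rw [this]; exact hadjw
            · intro hcon; exact hws (hcon ▸ hsupp (j + 1))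
            · intro hcon; exact hws (hcon ▸ hsupp (j + 1 - 2))
      · rintro ⟨j, hjt, hjk, rfl⟩
        by_cases hjt' : j ≤ t
        · exact Or.inl ⟨j, hjt', hjk, rfl⟩
        · have hj1 : j = t + 1 := by omega
          right
          constructor
          · refine ⟨P t, ⟨t, le_refl _, by omega, rfl⟩, ?_⟩
            rw [hj1]; exact hadj t (by omega)
          · intro t' ht' hcon
            rw [hφmem] at hcon
            obtain ⟨h1, h2, h3, h4, h5⟩ := hcon
            rcases hchord (t' - 1) j (by omega) hjk h3 with h6 | h6
            · exact h4 (by rw [show t' = j by omega])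
            · omega
  refine ⟨φ, ⟨?_, ?_, ?_⟩, ?_⟩
  · rw [hφdef]; simp
  · -- card bound
    intro t
    by_cases h : t = 0 ∨ k + 2 ≤ t
    · have hemp : φ t = ∅ := by rw [hφdef]; exact if_pos h
      rw [hemp]; simp
    · push_neg at h
      have ht1 : 1 ≤ t := by omega
      have ht2 : t ≤ k + 1 := by omega
      have hsub : φ t ⊆ G.neighborFinset (P (t - 1)) \ {P t, P (t - 2)} := by
        intro x hx
        rw [hφmem] at hx
        obtain ⟨-, -, hN, h4, h5⟩ := hx
        simp only [Finset.mem_sdiff, SimpleGraph.mem_neighborFinset, Finset.mem_insert,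
          Finset.mem_singleton, not_or]
        exact ⟨hN, h4, h5⟩
      rcases Nat.lt_or_ge k 1 with hk0 | hk1
      · -- k = 0, so t = 1, v = s
        have hk : k = 0 := by omega
        have hvs : v = s := by rw [← hP0, ← hPk 0 (by omega)]
        have hdegs : G.degree s ≤ b := by
          rcases hvdeg with ⟨-, hd⟩ | ⟨hne, -⟩
          · rwa [hvs] at hd
          · exact absurd hvs hne
        calc (φ t).card ≤ (G.neighborFinset (P (t - 1)) \ {P t, P (t - 2)}).card :=
              Finset.card_le_card hsub
          _ ≤ (G.neighborFinset (P (t - 1))).card := Finset.card_le_card (Finset.sdiff_subset)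
          _ = G.degree (P (t - 1)) := (G.card_neighborFinset_eq_degree _).symm
          _ ≤ b := by
              have : t = 1 := by omega
              rw [this, hP0]; exact hdegs
      · -- k ≥ 1
        rcases Nat.lt_or_ge t 2 with ht | ht
        · -- t = 1
          have ht1' : t = 1 := by omega
          subst ht1'
          have hmem1 : P 1 ∈ G.neighborFinset (P 0) := by
            rw [SimpleGraph.mem_neighborFinset]; exact hadj 0 hk1
          have hsub2 : φ 1 ⊆ G.neighborFinset (P 0) \ {P 1} := by
            refine hsub.trans (Finset.sdiff_subset_sdiff (Finset.Subset.refl _) ?_)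
            intro x hx
            simp only [Finset.mem_singleton] at hx
            simp [hx]
          calc (φ 1).card ≤ (G.neighborFinset (P 0) \ {P 1}).card := Finset.card_le_card hsub2
            _ = (G.neighborFinset (P 0)).card - 1 := by
                rw [Finset.card_sdiff_of_subset (by simpa using hmem1)]; simp
            _ ≤ G.degree s - 1 := by rw [G.card_neighborFinset_eq_degree, hP0]
            _ ≤ b := by omega
        · rcases Nat.lt_or_ge k t with htk | htk
          · -- t = k + 1
            have htk1 : t = k + 1 := by omega
            subst htk1
            have hkm : P (k + 1 - 2) = P (k - 1) := by rw [show k + 1 - 2 = k - 1 by omega]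
            have hvne : v ≠ s := by
              intro hcon
              have := hinj k 0 (le_refl _) (Nat.zero_le _)
                (by rw [hP0, hPk k (le_refl _), hcon])
              omega
            have hdegv : G.degree v ≤ b + 1 := by
              rcases hvdeg with ⟨hes, -⟩ | ⟨-, hd⟩
              · exact absurd hes hvne
              · exact hd
            have hmem1 : P (k - 1) ∈ G.neighborFinset (P (k + 1 - 1)) := by
              rw [SimpleGraph.mem_neighborFinset]
              have : k + 1 - 1 = (k - 1) + 1 := by omega
              rw [this]
              exact (hadj (k - 1) (by omega)).symm
            have hsub2 : φ (k + 1) ⊆ G.neighborFinset (P (k + 1 - 1)) \ {P (k - 1)} := by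
              refine hsub.trans (Finset.sdiff_subset_sdiff (Finset.Subset.refl _) ?_)
              intro x hx
              simp only [Finset.mem_singleton] at hx
              simp [hx, hkm]
            calc (φ (k + 1)).card ≤ (G.neighborFinset (P (k + 1 - 1)) \ {P (k - 1)}).card :=
                  Finset.card_le_card hsub2
              _ = (G.neighborFinset (P (k + 1 - 1))).card - 1 := by
                  rw [Finset.card_sdiff_of_subset (by simpa using hmem1)]; simp
              _ = G.degree v - 1 := by
                  rw [G.card_neighborFinset_eq_degree, hPk (k + 1 - 1) (by omega)]
              _ ≤ b := by omega
          · -- 2 ≤ t ≤ k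
            have hmem1 : P t ∈ G.neighborFinset (P (t - 1)) := by
              rw [SimpleGraph.mem_neighborFinset]
              have : t = (t - 1) + 1 := by omega
              rw [this]
              exact hadj (t - 1) (by omega)
            have hmem2 : P (t - 2) ∈ G.neighborFinset (P (t - 1)) := by
              rw [SimpleGraph.mem_neighborFinset]
              have : t - 1 = (t - 2) + 1 := by omega
              rw [this]
              exact (hadj (t - 2) (by omega)).symm
            have hne12 : P t ≠ P (t - 2) := by
              intro hcon
              have := hinj t (t - 2) htk (by omega) hcon
              omega
            have hpairsub : ({P t, P (t - 2)} : Finset V) ⊆ G.neighborFinset (P (t - 1)) := by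
              intro x hx
              simp only [Finset.mem_insert, Finset.mem_singleton] at hx
              rcases hx with rfl | rfl
              · exact hmem1
              · exact hmem2
            calc (φ t).card ≤ (G.neighborFinset (P (t - 1)) \ {P t, P (t - 2)}).card :=
                  Finset.card_le_card hsub
              _ = (G.neighborFinset (P (t - 1))).card - ({P t, P (t - 2)} : Finset V).card :=
                  Finset.card_sdiff_of_subset hpairsub
              _ = G.degree (P (t - 1)) - 2 := by
                  rw [G.card_neighborFinset_eq_degree, Finset.card_insert_of_notMem (by simpa using hne12),
                    Finset.card_singleton]
              _ ≤ b := by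
                  have := hmax (P (t - 1))
                  omega
  · -- protected vertices not burned
    intro t w hw
    rw [hinv t]
    rintro ⟨j, hjt, hjk, rfl⟩
    rw [hφmem] at hw
    obtain ⟨h1, h2, h3, h4, h5⟩ := hw
    have hte : t + 1 - 1 = t := by omega
    rw [hte] at h3
    have htk : t ≤ k := by omega
    rcases hchord t j htk hjk h3 with h6 | h6
    · omega
    · exact h5 (by rw [show t + 1 - 2 = j by omega])
  · -- leaves saved
    intro l hdeg hls t hl
    rw [hinv t] at hl
    obtain ⟨j, hjt, hjk, rfl⟩ := hl
    rcases Nat.eq_or_lt_of_le (Nat.zero_le j) with hj0 | hj0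
    · exact hls (hj0 ▸ hP0)
    · rcases Nat.eq_or_lt_of_le hjk with hjk' | hjk'
      · apply hvleaf
        rw [hjk'] at hdeg hls
        rw [hPk k (le_refl _)] at hdeg hls
        exact ⟨hdeg, hls⟩
      · -- 1 ≤ j < k : two distinct neighbors
        have hn1 : P (j - 1) ∈ G.neighborFinset (P j) := by
          rw [SimpleGraph.mem_neighborFinset]
          have hth : G.Adj (P (j - 1)) (P ((j - 1) + 1)) := hadj (j - 1) (by omega)
          rw [show (j - 1) + 1 = j by omega] at hth
          exact hth.symm
        have hn2 : P (j + 1) ∈ G.neighborFinset (P j) := by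
          rw [SimpleGraph.mem_neighborFinset]
          exact hadj j hjk'
        have hne : P (j - 1) ≠ P (j + 1) := by
          intro hcon
          have := hinj (j - 1) (j + 1) (by omega) (by omega) hcon
          omega
        have h2card : 1 < (G.neighborFinset (P j)).card :=
          Finset.one_lt_card.mpr ⟨_, hn1, _, hn2, hne⟩
        rw [G.card_neighborFinset_eq_degree, hdeg] at h2card
        omega
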